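/- Fix N ∈ (0,2) and set a = 1 - N/2. The function u(z) = exp(-|z|^a) satisfies -Δu + Vu = 0 on ℝ² \ {0}, where V(z) = a²(|z|^a - 1)|z|^{a-2} = (1 - N/2)²(|z|^{1-N/2} - 1)|z|^{-1-N/2}. Moreover, for every z with |z| ≥ 1, one has |V(z)| ≤ (1 - N/2)²|z|^{-N}. -/

import Mathlib

open Metric

lemma hasFDerivAt_normSq' (z : ℂ) :
    HasFDerivAt (fun w : ℂ => Complex.normSq w)
      ((2*z.re) • Complex.reCLM + (2*z.im) • Complex.imCLM) z := by
  have hre : HasFDerivAt (fun w : ℂ => w.re) Complex.reCLM z := Complex.reCLM.hasFDerivAt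
  have him : HasFDerivAt (fun w : ℂ => w.im) Complex.imCLM z := Complex.imCLM.hasFDerivAt
  simpa only [Complex.normSq_apply, two_mul, add_smul, add_assoc, Pi.mul_def, Pi.add_def] using
    (hre.mul hre).add (him.mul him)

noncomputable def GG (b t : ℝ) : ℝ := -(b * t^(b-1)) * Real.exp (-(t^b))

noncomputable def GG' (b t : ℝ) : ℝ :=
  -(b*((b-1)*t^(b-1-1))) * Real.exp (-(t^b))
    + -(b*t^(b-1)) * (Real.exp (-(t^b)) * -(b*t^(b-1)))

lemma hasDerivAt_g (b t : ℝ) (ht : 0 < t) :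
    HasDerivAt (fun s : ℝ => Real.exp (-(s^b))) (Real.exp (-(t^b)) * -(b * t^(b-1))) t :=
  ((Real.hasDerivAt_rpow_const (Or.inl ht.ne')).neg).exp

lemma hasDerivAt_GG (b t : ℝ) (ht : 0 < t) :
    HasDerivAt (GG b) (GG' b t) t := by
  have hc : HasDerivAt (fun s : ℝ => -(b * s^(b-1))) (-(b*((b-1)*t^(b-1-1)))) t :=
    ((Real.hasDerivAt_rpow_const (Or.inl ht.ne')).const_mul b).neg
  exact hc.mul (hasDerivAt_g b t ht)

/-- The Laplacian of a function on the plane (identified with `ℂ`). -/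
noncomputable def lap (u : ℂ → ℝ) (z : ℂ) : ℝ :=
  fderiv ℝ (fun w => fderiv ℝ u w 1) z 1 +
    fderiv ℝ (fun w => fderiv ℝ u w Complex.I) z Complex.I

/-- Sharpness example: for `N ∈ (0,2)` and `a = 1 - N/2`, the function
`u z = exp (-|z| ^ a)` solves `-Δu + Vu = 0` on `ℝ² \ {0}` with
`V z = a² (|z| ^ a - 1) |z| ^ (a - 2)`, and `|V z| ≤ (1 - N/2)² |z| ^ (-N)`
whenever `|z| ≥ 1`. -/
theorem sharpness_example
    (N a : ℝ) (hN : 0 < N) (hN' : N < 2) (ha : a = 1 - N / 2)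
    (u V : ℂ → ℝ)
    (hu : ∀ z : ℂ, u z = Real.exp (-(‖z‖ ^ a)))
    (hV : ∀ z : ℂ, V z = a ^ 2 * (‖z‖ ^ a - 1) * ‖z‖ ^ (a - 2)) :
    ContDiffOn ℝ 2 u {(0 : ℂ)}ᶜ ∧
    (∀ z : ℂ, z ≠ 0 → -lap u z + V z * u z = 0) ∧
    (∀ z : ℂ, V z = (1 - N / 2) ^ 2 * (‖z‖ ^ (1 - N / 2) - 1) * ‖z‖ ^ (-1 - N / 2)) ∧
    (∀ z : ℂ, 1 ≤ ‖z‖ → |V z| ≤ (1 - N / 2) ^ 2 * ‖z‖ ^ (-N)) := by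
  have ha0 : 0 < a := by rw [ha]; linarith
  refine ⟨?_, ?_, ?_, ?_⟩
  · -- smoothness
    rw [show u = fun w => Real.exp (-(‖w‖ ^ a)) from funext hu]
    intro z hz
    have hz' : z ≠ 0 := hz
    have h1 : ContDiffAt ℝ 2 (fun w : ℂ => ‖w‖) z := contDiffAt_norm ℝ hz'
    have h2 : ContDiffAt ℝ 2 (fun w : ℂ => ‖w‖ ^ a) z :=
      h1.rpow_const_of_ne (norm_ne_zero_iff.2 hz')
    exact ((Real.contDiff_exp.contDiffAt.comp z h2.neg)).contDiffWithinAt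
  · -- the PDE
    set b : ℝ := a / 2 with hb
    have hb2 : (2:ℝ) * b = a := by rw [hb]; ring
    have hnormSq : ∀ w : ℂ, Complex.normSq w = ‖w‖ ^ (2:ℕ) := fun w => (Complex.sq_norm w).symm
    have hpow : ∀ (w : ℂ) (x : ℝ), ‖w‖ ^ (2 * x) = Complex.normSq w ^ x := by
      intro w x
      rw [hnormSq, ← Real.rpow_natCast ‖w‖ 2, ← Real.rpow_mul (norm_nonneg w)]
      norm_num
    have huq : ∀ w : ℂ, u w = Real.exp (-(Complex.normSq w ^ b)) := by
      intro w
      rw [hu w, ← hpow w b, hb2]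
    have hU : ∀ w : ℂ, w ≠ 0 → HasFDerivAt u
        ((Real.exp (-(Complex.normSq w ^ b)) * -(b * Complex.normSq w ^ (b-1))) •
          ((2*w.re) • Complex.reCLM + (2*w.im) • Complex.imCLM)) w := by
      intro w hw
      have htw : 0 < Complex.normSq w := Complex.normSq_pos.2 hw
      have := (hasDerivAt_g b _ htw).comp_hasFDerivAt w (hasFDerivAt_normSq' w)
      have e : u = (fun s : ℝ => Real.exp (-(s^b))) ∘ Complex.normSq := funext fun x => huq x
      rw [e]; exact this
    intro z hz
    set t : ℝ := Complex.normSq z with htdef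
    have ht : 0 < t := Complex.normSq_pos.2 hz
    have key : ∀ v : ℂ, fderiv ℝ (fun w => fderiv ℝ u w v) z v
        = GG b t * (2*v.re*v.re + 2*v.im*v.im)
          + (2*z.re*v.re + 2*z.im*v.im) * (GG' b t * (2*z.re*v.re + 2*z.im*v.im)) := by
      intro v
      have hev : (fun w => fderiv ℝ u w v) =ᶠ[nhds z]
          (fun w => GG b (Complex.normSq w) * (2*w.re*v.re + 2*w.im*v.im)) := by
        filter_upwards [isOpen_compl_singleton.mem_nhds hz] with w hw
        rw [(hU w hw).fderiv]
        simp [GG]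
        ring
      rw [hev.fderiv_eq]
      have hGq : HasFDerivAt (fun w : ℂ => GG b (Complex.normSq w))
          (GG' b t • ((2*z.re) • Complex.reCLM + (2*z.im) • Complex.imCLM)) z :=
        by have := (hasDerivAt_GG b t ht).comp_hasFDerivAt z (hasFDerivAt_normSq' z); exact this
      have hlin : HasFDerivAt (fun w : ℂ => 2*w.re*v.re + 2*w.im*v.im)
          ((2*v.re) • Complex.reCLM + (2*v.im) • Complex.imCLM) z := by
        refine ((2*v.re) • Complex.reCLM + (2*v.im) • Complex.imCLM).hasFDerivAt.congr_of_eventuallyEq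
          (Filter.Eventually.of_forall fun w => ?_)
        simp
        ring
      have hψ := hGq.mul hlin
      rw [show (fun w : ℂ => GG b (Complex.normSq w) * (2*w.re*v.re + 2*w.im*v.im)) = ((fun w : ℂ => GG b (Complex.normSq w)) * fun w : ℂ => 2*w.re*v.re + 2*w.im*v.im) from rfl, hψ.fderiv]
      simp
      ring
    have hlap : lap u z = GG b t * 2 + (2*z.re) * (GG' b t * (2*z.re))
        + (GG b t * 2 + (2*z.im) * (GG' b t * (2*z.im))) := by
      have h1 := key 1
      have hI := key Complex.I
      simp only [Complex.one_re, Complex.one_im, Complex.I_re, Complex.I_im] at h1 hI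
      rw [lap, h1, hI]
      ring
    have hP1 : t^(b-1) = t * t^(b-2) := by
      rw [show b-1 = 1+(b-2) by ring, Real.rpow_add ht, Real.rpow_one]
    have hP2 : t^(b-1-1) = t^(b-2) := by rw [show b-1-1 = b-2 by ring]
    have hP0 : t^b = t * t^(b-1) := by
      nth_rewrite 1 [show b = 1 + (b-1) from by ring]
      rw [Real.rpow_add ht, Real.rpow_one]
    have hra : ‖z‖ ^ a = t ^ b := by rw [← hb2, hpow]
    have hra2 : ‖z‖ ^ (a-2) = t ^ (b-1) := by
      rw [show a - 2 = 2*(b-1) by rw [← hb2]; ring, hpow]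
    have htsum : t = z.re^2 + z.im^2 := by rw [htdef, Complex.normSq_apply]; ring
    rw [hlap, hV z, huq z, hra, hra2, GG, GG', hP2, hP0, hP1]
    rw [htsum]
    ring
  · -- rewriting V
    intro z
    rw [hV z, ha, show (1 - N/2) - 2 = -1 - N/2 by ring]
  · -- the bound
    intro z hz1
    have hr : (0:ℝ) < ‖z‖ := lt_of_lt_of_le one_pos hz1
    have h1 : 1 ≤ ‖z‖ ^ a := Real.one_le_rpow hz1 ha0.le
    have hnn : 0 ≤ V z := by
      rw [hV z]
      exact mul_nonneg (mul_nonneg (sq_nonneg a) (by linarith)) (Real.rpow_nonneg hr.le _)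
    rw [abs_of_nonneg hnn, hV z]
    calc a ^ 2 * (‖z‖ ^ a - 1) * ‖z‖ ^ (a - 2)
        ≤ a ^ 2 * ‖z‖ ^ a * ‖z‖ ^ (a - 2) := by
          gcongr
          linarith
      _ = a ^ 2 * ‖z‖ ^ (a + (a - 2)) := by rw [Real.rpow_add hr]; ring
      _ = (1 - N / 2) ^ 2 * ‖z‖ ^ (-N) := by
          rw [show a + (a - 2) = -N from by rw [ha]; ring, ha]
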